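/- Fix an integer s ≥ 2 and a real number θ > 0. There exist constants C > 0 and c > 0 such that for all integers p ≥ 1 and m ≥ 1 with p ≥ θ·m, R_{s,p}(m) ≤ C·p·M^p·ζ_c^{-m}·m^{-3/2}·e^{-c·p}. -/

import Mathlib

/-- Raney number `R_{s,p}(n) = (p/(s·n+p))·C(s·n+p, n)` as a real number. -/
noncomputable def raney (s p n : ℕ) : ℝ :=
  (p : ℝ) / (s * n + p) * (Nat.choose (s * n + p) n : ℝ)

/-- The analytic threshold `ζ_c = (s-1)^{s-1}/s^s`. -/
noncomputable def zetaC (s : ℕ) : ℝ := ((s : ℝ) - 1) ^ (s - 1) / (s : ℝ) ^ s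

/-- `M = s/(s-1)`. -/
noncomputable def Mconst (s : ℕ) : ℝ := (s : ℝ) / ((s : ℝ) - 1)

lemma choose_le_pow_div (N k r : ℕ) (h : k + r = N) :
    (N.choose k : ℝ) * (k : ℝ) ^ k * (r : ℝ) ^ r ≤ (N : ℝ) ^ N := by
  have hb := add_pow (x := (k:ℝ)) (y := (r:ℝ)) (n := N)
  have hk : k ∈ Finset.range (N+1) := by simp; omega
  have hsingle := Finset.single_le_sum
    (f := fun i => (k:ℝ)^i*(r:ℝ)^(N-i)*(N.choose i)) (fun i _ => by positivity) hk
  rw [← hb] at hsingle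
  have hNk : N - k = r := by omega
  have hcast : ((k:ℝ)+(r:ℝ)) = (N:ℝ) := by exact_mod_cast congrArg (Nat.cast : ℕ → ℝ) h
  simp only [hNk, hcast] at hsingle
  linarith [hsingle]

lemma core_log (u : ℝ) (hu0 : 0 < u) (hu1 : u ≤ 1) :
    (1 - u)^2 / 4 ≤ u * Real.log u - u + 1 := by
  set v := Real.sqrt u with hv
  have hv0 : 0 < v := Real.sqrt_pos.mpr hu0
  have hvv : v * v = u := Real.mul_self_sqrt hu0.le
  have hv1 : v ≤ 1 := by nlinarith
  have hlogv : 1 - 1/v ≤ Real.log v := by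
    have h := Real.log_le_sub_one_of_pos (show (0:ℝ) < v⁻¹ by positivity)
    rw [Real.log_inv] at h
    have : v⁻¹ = 1/v := by field_simp
    linarith [this ▸ h]
  have hlogu : Real.log u = 2 * Real.log v := by
    rw [hv, Real.log_sqrt hu0.le]; ring
  have h2 : 2*u - 2*v ≤ u * Real.log u := by
    have : u * (1 - 1/v) ≤ u * Real.log v := by
      apply mul_le_mul_of_nonneg_left hlogv hu0.le
    have huv : u * (1/v) = v := by
      field_simp; nlinarith
    rw [hlogu]; nlinarith [this, huv]
  nlinarith [sq_nonneg (1 - v), sq_nonneg v, hvv]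

lemma conv_gap (a w : ℝ) (ha : 0 < a) (haw : a ≤ w) :
    (w - a)^2 / (4 * w) ≤ a * Real.log a - w * Real.log w - (Real.log w + 1) * (a - w) := by
  have hw : 0 < w := lt_of_lt_of_le ha haw
  set u := a / w with hu
  have hu0 : 0 < u := by positivity
  have hu1 : u ≤ 1 := by rw [hu, div_le_one hw]; exact haw
  have hau : a = u * w := by rw [hu]; field_simp
  have hloga : Real.log a = Real.log u + Real.log w := by
    rw [hau, Real.log_mul (ne_of_gt hu0) (ne_of_gt hw)]
  have hcore := core_log u hu0 hu1
  have key : a * Real.log a - w * Real.log w - (Real.log w + 1) * (a - w)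
      = w * (u * Real.log u - u + 1) := by
    rw [hloga, hau]; ring
  rw [key]
  have h2 : (w - a)^2 / (4 * w) = w * ((1 - u)^2 / 4) := by
    rw [hau]; field_simp
  rw [h2]
  exact mul_le_mul_of_nonneg_left hcore hw.le

lemma conv_nonneg (b w : ℝ) (hw : 0 < w) (hwb : w ≤ b) :
    0 ≤ b * Real.log b - w * Real.log w - (Real.log w + 1) * (b - w) := by
  have hb : 0 < b := lt_of_lt_of_le hw hwb
  have hlog : 1 - w/b ≤ Real.log b - Real.log w := by
    have h := Real.log_le_sub_one_of_pos (show (0:ℝ) < w/b by positivity)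
    rw [Real.log_div (ne_of_gt hw) (ne_of_gt hb)] at h
    linarith
  have : b * (1 - w/b) ≤ b * (Real.log b - Real.log w) :=
    mul_le_mul_of_nonneg_left hlog hb.le
  have hbw : b * (1 - w/b) = b - w := by field_simp
  nlinarith [this]

lemma main_exp (t m p : ℕ) (hm : 1 ≤ m) (hp : 1 ≤ p) (θ : ℝ) (hθ : 0 < θ)
    (hpm : θ * m ≤ p) :
    ∀ N r : ℕ, N = (t+2)*m+p → r = (t+1)*m+p →
    (N:ℝ) * Real.log N ≤ (m:ℝ) * Real.log m + (r:ℝ) * Real.log r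
      + (N:ℝ) * Real.log ((t:ℝ)+2) - (r:ℝ) * Real.log ((t:ℝ)+1)
      - (θ/(4*((t:ℝ)+2)^2*(1+θ))) * p := by
  intro N r hNdef hrdef
  have ht0 : (0:ℝ) ≤ (t:ℝ) := Nat.cast_nonneg t
  set S : ℝ := (t:ℝ)+2 with hS
  set S1 : ℝ := (t:ℝ)+1 with hS1
  have hS0 : (0:ℝ) < S := by positivity
  have hS10 : (0:ℝ) < S1 := by positivity
  have hSS1 : S - S1 = 1 := by rw [hS, hS1]; ring
  have h1S : (1:ℝ) ≤ S := by rw [hS]; linarith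
  have hm0 : (0:ℝ) < (m:ℝ) := by exact_mod_cast hm
  have hp0 : (0:ℝ) < (p:ℝ) := by exact_mod_cast hp
  have hNc : (N:ℝ) = S*(m:ℝ)+(p:ℝ) := by rw [hNdef]; push_cast; ring
  have hrc : (r:ℝ) = S1*(m:ℝ)+(p:ℝ) := by rw [hrdef]; push_cast; ring
  have hN0 : (0:ℝ) < (N:ℝ) := by rw [hNc]; positivity
  have hr0 : (0:ℝ) < (r:ℝ) := by rw [hrc]; positivity
  set a : ℝ := (m:ℝ) with ha
  set B : ℝ := S1⁻¹ * (r:ℝ) with hB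
  set w : ℝ := S⁻¹ * (N:ℝ) with hw
  have hB0 : 0 < B := by positivity
  have hw0 : 0 < w := by positivity
  have ha0 : 0 < a := hm0
  have hwa : w - a = (p:ℝ)/S := by
    rw [hw, hNc]; field_simp; ring
  have haw : a ≤ w := by
    have : (0:ℝ) ≤ (p:ℝ)/S := by positivity
    linarith [hwa]
  have hwB : w ≤ B := by
    rw [hw, hB, hNc, hrc, ← sub_nonneg]
    have heq : S1⁻¹ * (S1 * a + ↑p) - S⁻¹ * (S * a + ↑p)
        = (p:ℝ) * (S - S1) / (S * S1) := by field_simp; ring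
    rw [heq, hSS1]
    positivity
  -- decomposition
  have hsum : a + S1 * B = S * w := by
    rw [hB, hw, hNc, hrc]; field_simp; ring
  have hDa := conv_gap a w ha0 haw
  have hDB := conv_nonneg B w hw0 hwB
  have hF : (w - a)^2/(4*w)
      ≤ a * Real.log a + S1 * (B * Real.log B) - S * (w * Real.log w) := by
    have hdec : a * Real.log a + S1 * (B * Real.log B) - S * (w * Real.log w)
        = (a * Real.log a - w * Real.log w - (Real.log w + 1) * (a - w))
          + S1 * (B * Real.log B - w * Real.log w - (Real.log w + 1) * (B - w)) := by
      linear_combination (Real.log w + 1) * hsum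
    have hprod := mul_nonneg hS10.le hDB
    rw [hdec]; exact le_trans hDa (le_add_of_nonneg_right hprod)
  -- quantitative lower bound
  have hwle : w ≤ (p:ℝ)/θ + (p:ℝ) := by
    have h1 : a ≤ (p:ℝ)/θ := by
      rw [le_div_iff₀ hθ]
      calc a * θ = θ * a := by ring
        _ ≤ (p:ℝ) := hpm
    have h3 : (p:ℝ)/S ≤ (p:ℝ) := by
      rw [div_le_iff₀ hS0]
      exact le_mul_of_one_le_right hp0.le h1S
    have h2 : w = a + (p:ℝ)/S := by linarith [hwa]
    linarith
  have hwθ : θ * w ≤ (p:ℝ) * (1+θ) := by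
    have := mul_le_mul_of_nonneg_left hwle hθ.le
    have hfs : θ * ((p:ℝ)/θ + (p:ℝ)) = (p:ℝ) * (1+θ) := by field_simp
    linarith [hfs ▸ this]
  have hq : (θ/(4*S^2*(1+θ))) * p ≤ (w - a)^2/(4*w) := by
    rw [hwa]
    have hkey : θ * (p:ℝ) * (4*w) ≤ ((p:ℝ)/S)^2 * (4*S^2*(1+θ)) := by
      have heq : ((p:ℝ)/S)^2 * (4*S^2*(1+θ)) = 4*(p:ℝ)*((p:ℝ)*(1+θ)) := by
        field_simp
      have hstep : 4*(p:ℝ)*(θ*w) ≤ 4*(p:ℝ)*((p:ℝ)*(1+θ)) :=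
        mul_le_mul_of_nonneg_left hwθ (by positivity)
      rw [heq]; linarith [hstep]
    calc (θ/(4*S^2*(1+θ))) * p = θ * (p:ℝ) / (4*S^2*(1+θ)) := by ring
      _ ≤ ((p:ℝ)/S)^2/(4*w) := by
          rw [div_le_div_iff₀ (by positivity) (by positivity)]
          linarith [hkey]
  -- rewrite B and w logs
  have hlogB : Real.log B = Real.log r - Real.log S1 := by
    rw [hB, Real.log_mul (by positivity) (ne_of_gt hr0), Real.log_inv]; ring
  have hlogw : Real.log w = Real.log N - Real.log S := by
    rw [hw, Real.log_mul (by positivity) (ne_of_gt hN0), Real.log_inv]; ring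
  have hBr : S1 * B = (r:ℝ) := by rw [hB]; field_simp
  have hwN : S * w = (N:ℝ) := by rw [hw]; field_simp
  have e1 : S1 * (B * Real.log B) = (r:ℝ) * Real.log r - (r:ℝ) * Real.log S1 := by
    rw [hlogB]; linear_combination (Real.log r - Real.log S1) * hBr
  have e2 : S * (w * Real.log w) = (N:ℝ) * Real.log N - (N:ℝ) * Real.log S := by
    rw [hlogw]; linear_combination (Real.log N - Real.log S) * hwN
  rw [e1, e2] at hF
  have := le_trans hq hF
  rw [ha] at this
  linarith [this]

lemma chooseB (t m p : ℕ) (hm : 1 ≤ m) (hp : 1 ≤ p) (θ : ℝ) (hθ : 0 < θ)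
    (hpm : θ * m ≤ p) :
    (Nat.choose ((t+2)*m+p) m : ℝ) ≤ Mconst (t+2) ^ p * (zetaC (t+2))⁻¹ ^ m
      * Real.exp (-(θ/(4*((t:ℝ)+2)^2*(1+θ))) * p) := by
  set N := (t+2)*m+p with hNdef
  set r := (t+1)*m+p with hrdef
  have hmr : m + r = N := by rw [hNdef, hrdef]; ring
  have ht0 : (0:ℝ) ≤ (t:ℝ) := Nat.cast_nonneg t
  have hS0 : (0:ℝ) < (t:ℝ)+2 := by positivity
  have hS10 : (0:ℝ) < (t:ℝ)+1 := by positivity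
  have hm0 : (0:ℝ) < (m:ℝ) := by exact_mod_cast hm
  have hp0 : (0:ℝ) < (p:ℝ) := by exact_mod_cast hp
  have hNc : (N:ℝ) = ((t:ℝ)+2)*(m:ℝ)+(p:ℝ) := by rw [hNdef]; push_cast; ring
  have hrc : (r:ℝ) = ((t:ℝ)+1)*(m:ℝ)+(p:ℝ) := by rw [hrdef]; push_cast; ring
  have hN0 : (0:ℝ) < (N:ℝ) := by rw [hNc]; positivity
  have hr0 : (0:ℝ) < (r:ℝ) := by rw [hrc]; positivity
  -- log of Mconst and zetaC inverse
  have hMcast : Mconst (t+2) = ((t:ℝ)+2)/((t:ℝ)+1) := by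
    rw [Mconst]; push_cast; ring_nf
  have hMpos : 0 < Mconst (t+2) := by rw [hMcast]; positivity
  have hZcast : zetaC (t+2) = ((t:ℝ)+1)^(t+1)/((t:ℝ)+2)^(t+2) := by
    rw [zetaC]
    have h1 : (t:ℕ)+2-1 = t+1 := by omega
    rw [h1]; push_cast
    have h2 : ((t:ℝ)+2-1) = (t:ℝ)+1 := by ring
    rw [h2]
  have hZpos : 0 < zetaC (t+2) := by rw [hZcast]; positivity
  have hlogM : Real.log (Mconst (t+2)) = Real.log ((t:ℝ)+2) - Real.log ((t:ℝ)+1) := by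
    rw [hMcast, Real.log_div (ne_of_gt hS0) (ne_of_gt hS10)]
  have hlogZ : Real.log ((zetaC (t+2))⁻¹)
      = ((t:ℝ)+2) * Real.log ((t:ℝ)+2) - ((t:ℝ)+1) * Real.log ((t:ℝ)+1) := by
    rw [hZcast, Real.log_inv, Real.log_div (by positivity) (by positivity),
      Real.log_pow, Real.log_pow]
    push_cast; ring
  set Y := Mconst (t+2) ^ p * (zetaC (t+2))⁻¹ ^ m
      * Real.exp (-(θ/(4*((t:ℝ)+2)^2*(1+θ))) * p) with hY
  have hYpos : 0 < Y := by
    rw [hY]; positivity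
  have hlogY : Real.log Y = (p:ℝ) * Real.log (Mconst (t+2))
      + (m:ℝ) * Real.log ((zetaC (t+2))⁻¹) + (-(θ/(4*((t:ℝ)+2)^2*(1+θ))) * p) := by
    rw [hY, Real.log_mul (by positivity) (ne_of_gt (Real.exp_pos _)),
      Real.log_mul (by positivity) (by positivity),
      Real.log_pow, Real.log_pow, Real.log_exp]
  -- key product inequality
  have hNY : (N:ℝ)^N ≤ (m:ℝ)^m * (r:ℝ)^r * Y := by
    rw [← Real.log_le_log_iff (by positivity) (by positivity),
      Real.log_mul (by positivity) (ne_of_gt hYpos),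
      Real.log_mul (by positivity) (by positivity),
      Real.log_pow, Real.log_pow, Real.log_pow, hlogY, hlogM, hlogZ]
    have hmain := main_exp t m p hm hp θ hθ hpm N r hNdef hrdef
    have e : (p:ℝ) * (Real.log ((t:ℝ)+2) - Real.log ((t:ℝ)+1))
        + (m:ℝ) * (((t:ℝ)+2) * Real.log ((t:ℝ)+2) - ((t:ℝ)+1) * Real.log ((t:ℝ)+1))
        = (N:ℝ) * Real.log ((t:ℝ)+2) - (r:ℝ) * Real.log ((t:ℝ)+1) := by
      rw [hNc, hrc]; ring
    linarith [hmain, e]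
  have hL1 := choose_le_pow_div N m r hmr
  have hpow : (0:ℝ) < (m:ℝ)^m * (r:ℝ)^r := by positivity
  have : (N.choose m : ℝ) * ((m:ℝ)^m * (r:ℝ)^r) ≤ Y * ((m:ℝ)^m * (r:ℝ)^r) := by
    calc (N.choose m : ℝ) * ((m:ℝ)^m * (r:ℝ)^r)
        = (N.choose m : ℝ) * (m:ℝ)^m * (r:ℝ)^r := by ring
      _ ≤ (N:ℝ)^N := hL1
      _ ≤ (m:ℝ)^m * (r:ℝ)^r * Y := hNY
      _ = Y * ((m:ℝ)^m * (r:ℝ)^r) := by ring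
  exact le_of_mul_le_mul_right this hpow

lemma poly_bound (ε : ℝ) (hε : 0 < ε) (m : ℕ) (hm : 1 ≤ m) :
    (m:ℝ)^((3:ℝ)/2) ≤ 4/ε^2 * Real.exp (ε*m) := by
  have hm1 : (1:ℝ) ≤ (m:ℝ) := by exact_mod_cast hm
  have h1 : (m:ℝ)^((3:ℝ)/2) ≤ (m:ℝ)^((2:ℕ):ℝ) := by
    apply Real.rpow_le_rpow_of_exponent_le hm1; norm_num
  rw [Real.rpow_natCast] at h1
  have hhalf : 1 + ε*m/2 ≤ Real.exp (ε*m/2) := by linarith [Real.add_one_le_exp (ε*m/2)]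
  have hsq : Real.exp (ε*m) = Real.exp (ε*m/2)^2 := by
    rw [sq, ← Real.exp_add]; ring_nf
  have hεm : (0:ℝ) ≤ ε*m := by positivity
  have h2 : (ε*(m:ℝ)/2)^2 ≤ Real.exp (ε*m) := by
    rw [hsq]; nlinarith [hhalf, hεm]
  have heq : 4/ε^2 * (ε*(m:ℝ)/2)^2 = (m:ℝ)^2 := by field_simp; ring
  have h3 := mul_le_mul_of_nonneg_left h2 (by positivity : (0:ℝ) ≤ 4/ε^2)
  rw [heq] at h3
  linarith


/-- Uniform exponential gap away from the critical slope: for `p ≥ θ·m`,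
`R_{s,p}(m) ≤ C·p·M^p·ζ_c^{-m}·m^{-3/2}·e^{-c·p}`. -/
theorem stmt7 (s : ℕ) (hs : 2 ≤ s) (θ : ℝ) (hθ : 0 < θ) :
    ∃ C c : ℝ, 0 < C ∧ 0 < c ∧ ∀ p m : ℕ, 1 ≤ p → 1 ≤ m → θ * m ≤ (p : ℝ) →
      raney s p m ≤ C * p * Mconst s ^ p * (zetaC s)⁻¹ ^ m * (m : ℝ) ^ (-(3 : ℝ) / 2)
        * Real.exp (-c * p) := by
  obtain ⟨t, rfl⟩ : ∃ t, s = t+2 := ⟨s-2, by omega⟩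
  have ht0 : (0:ℝ) ≤ (t:ℝ) := Nat.cast_nonneg t
  set c : ℝ := θ/(4*((t:ℝ)+2)^2*(1+θ))/2 with hc
  have hc0 : 0 < c := by rw [hc]; positivity
  set C : ℝ := 4/(c*θ)^2 with hC
  have hC0 : 0 < C := by rw [hC]; positivity
  refine ⟨C, c, hC0, hc0, ?_⟩
  intro p m hp hm hpm
  have hm0 : (0:ℝ) < (m:ℝ) := by exact_mod_cast hm
  have hp0 : (0:ℝ) < (p:ℝ) := by exact_mod_cast hp
  have hp1 : (1:ℝ) ≤ (p:ℝ) := by exact_mod_cast hp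
  -- positivity of the constants
  have hMpos : 0 < Mconst (t+2) := by
    rw [Mconst]
    have : ((t+2:ℕ):ℝ) - 1 = (t:ℝ)+1 := by push_cast; ring
    rw [this]
    have : ((t+2:ℕ):ℝ) = (t:ℝ)+2 := by push_cast; ring
    rw [this]; positivity
  have hZpos : 0 < zetaC (t+2) := by
    rw [zetaC]
    have h1 : ((t+2:ℕ):ℝ) - 1 = (t:ℝ)+1 := by push_cast; ring
    have h2 : ((t+2:ℕ):ℝ) = (t:ℝ)+2 := by push_cast; ring
    rw [h1, h2]; positivity
  have hZipos : 0 < (zetaC (t+2))⁻¹ := by positivity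
  have hMp : 0 < Mconst (t+2) ^ p := by positivity
  have hZm : 0 < (zetaC (t+2))⁻¹ ^ m := by positivity
  have hrpos : 0 < (m:ℝ)^((3:ℝ)/2) := Real.rpow_pos_of_pos hm0 _
  -- step 1 : raney ≤ choose
  have step1 : raney (t+2) p m ≤ (Nat.choose ((t+2)*m+p) m : ℝ) := by
    rw [raney]
    have hden : (0:ℝ) < ((t+2:ℕ):ℝ) * (m:ℝ) + (p:ℝ) := by
      have : ((t+2:ℕ):ℝ) = (t:ℝ)+2 := by push_cast; ring
      rw [this]; positivity
    have hfrac : (p:ℝ) / (((t+2:ℕ):ℝ) * (m:ℝ) + (p:ℝ)) ≤ 1 := by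
      rw [div_le_one hden]
      have : (0:ℝ) ≤ ((t+2:ℕ):ℝ) * (m:ℝ) := by positivity
      linarith
    exact mul_le_of_le_one_left (Nat.cast_nonneg _) hfrac
  -- step 2 : choose bound
  have step2 := chooseB t m p hm hp θ hθ hpm
  have hexp_eq : Real.exp (-(θ/(4*((t:ℝ)+2)^2*(1+θ))) * p)
      = Real.exp (-c*p) * Real.exp (-c*p) := by
    rw [← Real.exp_add, hc]; ring_nf
  -- step 4 : exp(-cp) ≤ C * m^{-3/2}
  have step4 : Real.exp (-c*p) ≤ C * (m:ℝ)^(-(3:ℝ)/2) := by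
    have hpb := poly_bound (c*θ) (by positivity) m hm
    have hcθ : c*θ*(m:ℝ) ≤ c*(p:ℝ) := by
      have := mul_le_mul_of_nonneg_left hpm hc0.le
      calc c*θ*(m:ℝ) = c*(θ*(m:ℝ)) := by ring
        _ ≤ c*(p:ℝ) := this
    have hpb2 : (m:ℝ)^((3:ℝ)/2) ≤ C * Real.exp (c*p) := by
      calc (m:ℝ)^((3:ℝ)/2) ≤ 4/(c*θ)^2 * Real.exp (c*θ*m) := hpb
        _ ≤ 4/(c*θ)^2 * Real.exp (c*p) := by
            apply mul_le_mul_of_nonneg_left (Real.exp_le_exp.mpr hcθ) (by positivity)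
        _ = C * Real.exp (c*p) := by rw [hC]
    have hneg : -(3:ℝ)/2 = -((3:ℝ)/2) := by norm_num
    rw [hneg, Real.rpow_neg hm0.le]
    rw [show C * ((m:ℝ)^((3:ℝ)/2))⁻¹ = C / (m:ℝ)^((3:ℝ)/2) by ring,
      le_div_iff₀ hrpos]
    calc Real.exp (-c*p) * (m:ℝ)^((3:ℝ)/2)
        ≤ Real.exp (-c*p) * (C * Real.exp (c*p)) := by
          apply mul_le_mul_of_nonneg_left hpb2 (Real.exp_pos _).le
      _ = C * (Real.exp (-c*p) * Real.exp (c*p)) := by ring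
      _ = C := by rw [← Real.exp_add]; norm_num
  -- assemble
  have hmneg : 0 < (m:ℝ)^(-(3:ℝ)/2) := Real.rpow_pos_of_pos hm0 _
  calc raney (t+2) p m ≤ (Nat.choose ((t+2)*m+p) m : ℝ) := step1
    _ ≤ Mconst (t+2) ^ p * (zetaC (t+2))⁻¹ ^ m
        * Real.exp (-(θ/(4*((t:ℝ)+2)^2*(1+θ))) * p) := step2
    _ = Mconst (t+2) ^ p * (zetaC (t+2))⁻¹ ^ m * Real.exp (-c*p) * Real.exp (-c*p) := by
        rw [hexp_eq]; ring
    _ ≤ Mconst (t+2) ^ p * (zetaC (t+2))⁻¹ ^ m * (C * (m:ℝ)^(-(3:ℝ)/2)) * Real.exp (-c*p) := by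
        apply mul_le_mul_of_nonneg_right _ (Real.exp_pos _).le
        apply mul_le_mul_of_nonneg_left step4 (by positivity)
    _ = C * 1 * Mconst (t+2) ^ p * (zetaC (t+2))⁻¹ ^ m * (m:ℝ)^(-(3:ℝ)/2)
        * Real.exp (-c*p) := by ring
    _ ≤ C * p * Mconst (t+2) ^ p * (zetaC (t+2))⁻¹ ^ m * (m:ℝ)^(-(3:ℝ)/2)
        * Real.exp (-c*p) := by
        have h1 : C * 1 ≤ C * p := by
          apply mul_le_mul_of_nonneg_left hp1 hC0.le
        have hrest : (0:ℝ) ≤ Mconst (t+2) ^ p * (zetaC (t+2))⁻¹ ^ m * (m:ℝ)^(-(3:ℝ)/2)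
            * Real.exp (-c*p) := by positivity
        nlinarith [h1, hrest, mul_le_mul_of_nonneg_right h1 hrest]
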